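/- arXiv:1707.07196 — 5 statements merged into one kernel-verified Lean document; each statement's English description precedes it below -/
import Mathlib

section
/- Let V be an N-by-k real matrix with orthonormal columns (N > k), and let R be an N-by-r real matrix (r > k) such that every singular value sigma_i of V^T R satisfies 1 - eps <= sigma_i^2 <= 1 + eps for some 0 < eps < 1. Then the spectral norm of the difference between the Moore-Penrose pseudoinverse and the transpose of V^T R is bounded: ||(V^T R)^+ - (V^T R)^T||_2 <= eps / sqrt(1 - eps). -/
open Matrix

/-- Spectral (operator) norm of a real matrix. -/
noncomputable def specNorm {m n : ℕ} (M : Matrix (Fin m) (Fin n) ℝ) : ℝ :=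
  ‖LinearMap.toContinuousLinearMap (Matrix.toEuclideanLin M)‖

/-- Moore–Penrose pseudoinverse of a full-row-rank matrix: `M⁺ = Mᵀ (M Mᵀ)⁻¹`. -/
noncomputable def pinvFR {k r : ℕ} (M : Matrix (Fin k) (Fin r) ℝ) :
    Matrix (Fin r) (Fin k) ℝ :=
  Mᵀ * (M * Mᵀ)⁻¹

/-- orthonormal columns preserve the sum of squares under `mulVec`. -/
lemma sum_sq_mulVec_eq {m n : ℕ} (A : Matrix (Fin m) (Fin n) ℝ)
    (hA : Aᵀ * A = 1) (x : Fin n → ℝ) :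
    ∑ i, (A.mulVec x i)^2 = ∑ j, (x j)^2 := by
  have h1 : ∑ i, (A.mulVec x i)^2 = (A.mulVec x) ⬝ᵥ (A.mulVec x) := by
    simp [dotProduct, sq]
  have h2 : ∑ j, (x j)^2 = x ⬝ᵥ x := by simp [dotProduct, sq]
  rw [h1, h2, Matrix.dotProduct_mulVec]
  have : (A *ᵥ x) ᵥ* A = x := by
    rw [show A *ᵥ x = x ᵥ* Aᵀ from (Matrix.vecMul_transpose A x).symm,
      Matrix.vecMul_vecMul, hA, Matrix.vecMul_one]
  rw [this]

lemma specNorm_le_of_sum_sq {m n : ℕ} (M : Matrix (Fin m) (Fin n) ℝ) (c : ℝ) (hc : 0 ≤ c)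
    (h : ∀ x : Fin n → ℝ, ∑ i, (M.mulVec x i)^2 ≤ c^2 * ∑ j, (x j)^2) :
    specNorm M ≤ c := by
  apply ContinuousLinearMap.opNorm_le_bound _ hc
  intro x
  rw [LinearMap.coe_toContinuousLinearMap']
  have hx : ‖x‖ = Real.sqrt (∑ j, (x j)^2) := by
    simp [EuclideanSpace.norm_eq, Real.norm_eq_abs, sq_abs]
  have hMx : ‖Matrix.toEuclideanLin M x‖
      = Real.sqrt (∑ i, (M.mulVec (fun j => x j) i)^2) := by
    simp only [EuclideanSpace.norm_eq, Real.norm_eq_abs, sq_abs]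
    rfl
  rw [hx, hMx]
  calc Real.sqrt (∑ i, (M.mulVec (fun j => x j) i)^2)
      ≤ Real.sqrt (c^2 * ∑ j, (x j)^2) := Real.sqrt_le_sqrt (h _)
    _ = c * Real.sqrt (∑ j, (x j)^2) := by
        rw [Real.sqrt_mul (sq_nonneg c), Real.sqrt_sq hc]

/-- if `V` is `N × k` with orthonormal columns (`N > k`) and `R` is `N × r`
(`r > k`) such that every singular value `d i` of `Vᵀ R` (given through an SVD
`Vᵀ R = P (diag d) Qᵀ`) satisfies `1 - ε ≤ (d i)² ≤ 1 + ε` with `0 < ε < 1`, then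
`‖(Vᵀ R)⁺ - (Vᵀ R)ᵀ‖₂ ≤ ε / √(1 - ε)`. -/
theorem pinv_sub_transpose_specNorm_le (N k r : ℕ) (hNk : k < N) (hkr : k < r) (ε : ℝ)
    (hε : 0 < ε) (hε1 : ε < 1)
    (V : Matrix (Fin N) (Fin k) ℝ) (R : Matrix (Fin N) (Fin r) ℝ)
    (P : Matrix (Fin k) (Fin k) ℝ) (d : Fin k → ℝ) (Q : Matrix (Fin r) (Fin k) ℝ)
    (hV : Vᵀ * V = 1)
    (hP : Pᵀ * P = 1) (hP' : P * Pᵀ = 1) (hQ : Qᵀ * Q = 1)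
    (hsvd : Vᵀ * R = P * Matrix.diagonal d * Qᵀ)
    (hd : ∀ i, 1 - ε ≤ (d i)^2 ∧ (d i)^2 ≤ 1 + ε) :
    specNorm (pinvFR (Vᵀ * R) - (Vᵀ * R)ᵀ) ≤ ε / Real.sqrt (1 - ε) := by
  have h1ε : (0:ℝ) < 1 - ε := by linarith
  have hs : 0 < Real.sqrt (1 - ε) := Real.sqrt_pos.mpr h1ε
  have hcpos : 0 ≤ ε / Real.sqrt (1 - ε) := le_of_lt (div_pos hε hs)
  have hdne : ∀ i, d i ≠ 0 := by
    intro i h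
    have := (hd i).1
    rw [h] at this
    norm_num at this
    linarith
  -- cancellation helpers
  have cQ : ∀ {p : ℕ} (X : Matrix (Fin k) (Fin p) ℝ), Qᵀ * (Q * X) = X := by
    intro p X; rw [← Matrix.mul_assoc, hQ, Matrix.one_mul]
  have cP : ∀ {p : ℕ} (X : Matrix (Fin k) (Fin p) ℝ), Pᵀ * (P * X) = X := by
    intro p X; rw [← Matrix.mul_assoc, hP, Matrix.one_mul]
  have cD : ∀ (a b : Fin k → ℝ) {p : ℕ} (X : Matrix (Fin k) (Fin p) ℝ),
      Matrix.diagonal a * (Matrix.diagonal b * X)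
        = Matrix.diagonal (fun i => a i * b i) * X := by
    intro a b p X
    rw [← Matrix.mul_assoc, Matrix.diagonal_mul_diagonal]
  have hMT : (Vᵀ * R)ᵀ = Q * Matrix.diagonal d * Pᵀ := by
    rw [hsvd, Matrix.transpose_mul, Matrix.transpose_mul, Matrix.diagonal_transpose,
      Matrix.transpose_transpose, Matrix.mul_assoc]
  have hMMT : (Vᵀ * R) * (Vᵀ * R)ᵀ
      = P * Matrix.diagonal (fun i => d i * d i) * Pᵀ := by
    rw [hMT, hsvd]
    simp only [Matrix.mul_assoc, cQ, cD]
  have hinv : ((Vᵀ * R) * (Vᵀ * R)ᵀ)⁻¹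
      = P * Matrix.diagonal (fun i => (d i)⁻¹ * (d i)⁻¹) * Pᵀ := by
    apply Matrix.inv_eq_right_inv
    rw [hMMT]
    simp only [Matrix.mul_assoc, cP, cD]
    have : (fun i => d i * d i * ((d i)⁻¹ * (d i)⁻¹)) = fun _ : Fin k => (1:ℝ) := by
      funext i
      rw [mul_mul_mul_comm, mul_inv_cancel₀ (hdne i), one_mul]
    rw [this, Matrix.diagonal_one, Matrix.one_mul, hP']
  have hpinv : pinvFR (Vᵀ * R) = Q * Matrix.diagonal (fun i => (d i)⁻¹) * Pᵀ := by
    unfold pinvFR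
    rw [hinv, hMT]
    simp only [Matrix.mul_assoc, cP, cD]
    have hfun : (fun i => d i * ((d i)⁻¹ * (d i)⁻¹)) = fun i => (d i)⁻¹ := by
      funext i; rw [← mul_assoc, mul_inv_cancel₀ (hdne i), one_mul]
    rw [hfun]
  have key : pinvFR (Vᵀ * R) - (Vᵀ * R)ᵀ
      = Q * Matrix.diagonal (fun i => (d i)⁻¹ - d i) * Pᵀ := by
    rw [hpinv, hMT, ← Matrix.sub_mul, ← Matrix.mul_sub, ← Matrix.diagonal_sub]
  rw [key]
  -- entrywise bound on the diagonal
  have hent : ∀ i, |(d i)⁻¹ - d i| ≤ ε / Real.sqrt (1 - ε) := by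
    intro i
    have h1 : |1 - (d i)^2| ≤ ε := abs_le.mpr ⟨by linarith [(hd i).2], by linarith [(hd i).1]⟩
    have h2 : Real.sqrt (1 - ε) ≤ |d i| := by
      rw [← Real.sqrt_sq_eq_abs]
      exact Real.sqrt_le_sqrt (hd i).1
    have h3 : (d i)⁻¹ - d i = (1 - (d i)^2) / d i := by
      rw [sub_div, one_div, sq, mul_div_assoc, div_self (hdne i), mul_one]
    rw [h3, abs_div]
    exact div_le_div₀ hε.le h1 hs h2
  apply specNorm_le_of_sum_sq _ _ hcpos
  intro x
  rw [show (Q * Matrix.diagonal (fun i => (d i)⁻¹ - d i) * Pᵀ).mulVec x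
      = Q.mulVec ((Matrix.diagonal (fun i => (d i)⁻¹ - d i)).mulVec (Pᵀ.mulVec x)) by
    rw [Matrix.mulVec_mulVec, Matrix.mulVec_mulVec]]
  rw [sum_sq_mulVec_eq Q hQ]
  have hPz : ∑ j, ((Pᵀ).mulVec x j)^2 = ∑ j, (x j)^2 := by
    apply sum_sq_mulVec_eq
    rw [Matrix.transpose_transpose, hP']
  rw [← hPz, Finset.mul_sum]
  apply Finset.sum_le_sum
  intro i _
  rw [Matrix.mulVec_diagonal]
  rw [mul_pow]
  apply mul_le_mul_of_nonneg_right _ (sq_nonneg _)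
  calc ((d i)⁻¹ - d i)^2 = |(d i)⁻¹ - d i|^2 := (sq_abs _).symm
    _ ≤ (ε / Real.sqrt (1 - ε))^2 := by
        apply pow_le_pow_left₀ (abs_nonneg _) (hent i)
end

section
/- Let X be a D-by-N real matrix, lambda > 0, and Z* = lambda (lambda X^T X + I)^{-1} X^T X. Then Z* minimizes the LSR objective Z -> (1/2)||Z||_F^2 + (lambda/2)||X - X Z||_F^2 over all N-by-N real matrices Z. -/
open Matrix

/-- Frobenius norm of a real matrix. -/
noncomputable def frobNorm {m n : ℕ} (M : Matrix (Fin m) (Fin n) ℝ) : ℝ :=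
  Real.sqrt (∑ i, ∑ j, (M i j)^2)

/-- `Z* = lam (lam Xᵀ X + I)⁻¹ Xᵀ X` minimizes the LSR objective
`Z ↦ (1/2)‖Z‖_F² + (lam/2)‖X - X Z‖_F²` over all `N × N` real matrices. -/
theorem LSR_closed_form_minimizer (D N : ℕ) (lam : ℝ) (hlam : 0 < lam)
    (X : Matrix (Fin D) (Fin N) ℝ) :
    let Zstar : Matrix (Fin N) (Fin N) ℝ :=
      lam • ((lam • (Xᵀ * X) + 1)⁻¹ * (Xᵀ * X))
    ∀ Z : Matrix (Fin N) (Fin N) ℝ,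
      (1/2) * frobNorm Zstar ^ 2 + (lam/2) * frobNorm (X - X * Zstar) ^ 2 ≤
        (1/2) * frobNorm Z ^ 2 + (lam/2) * frobNorm (X - X * Z) ^ 2 := by
  intro Zstar Z
  set M : Matrix (Fin N) (Fin N) ℝ := Xᵀ * X with hM
  have hMsymm : Mᵀ = M := by rw [hM, transpose_mul, transpose_transpose]
  have hMps : M.PosSemidef := posSemidef_conjTranspose_mul_self X
  have hA : (lam • M + 1).PosDef := by
    have h1 : (lam • M).PosSemidef := by
      refine Matrix.posSemidef_iff_dotProduct_mulVec.mpr ⟨?_, ?_⟩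
      · unfold Matrix.IsHermitian
        rw [conjTranspose_smul, hMps.1]; simp
      · intro x
        rw [smul_mulVec, dotProduct_smul]
        exact mul_nonneg hlam.le (hMps.dotProduct_mulVec_nonneg x)
    exact Matrix.PosDef.posSemidef_add h1 Matrix.PosDef.one
  have hinv : (lam • M + 1) * (lam • M + 1)⁻¹ = 1 :=
    mul_nonsing_inv _ ((Matrix.isUnit_iff_isUnit_det _).mp hA.isUnit)
  have hAZ : Zstar + lam • (M * Zstar) = lam • M := by
    have h : (lam • M + 1) * Zstar = lam • M := by
      show (lam • M + 1) * (lam • ((lam • M + 1)⁻¹ * M)) = lam • M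
      rw [Matrix.mul_smul, ← Matrix.mul_assoc, hinv, Matrix.one_mul]
    calc Zstar + lam • (M * Zstar) = (lam • M + 1) * Zstar := by
          rw [Matrix.add_mul, Matrix.one_mul, smul_mul_assoc, add_comm]
      _ = lam • M := h
  -- Frobenius norm squared equals trace of `Wᵀ * W`.
  have hfrob : ∀ (m n : ℕ) (W : Matrix (Fin m) (Fin n) ℝ),
      frobNorm W ^ 2 = trace (Wᵀ * W) := by
    intro m n W
    rw [frobNorm, Real.sq_sqrt (by positivity)]
    rw [Finset.sum_comm]
    simp [trace, Matrix.mul_apply, Matrix.diag, sq]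
  rw [hfrob, hfrob, hfrob, hfrob]
  have trT : ∀ P Q : Matrix (Fin N) (Fin N) ℝ, trace (Pᵀ * Q) = trace (Qᵀ * P) := by
    intro P Q
    rw [← trace_transpose (Pᵀ * Q), transpose_mul, transpose_transpose]
  -- the key completion-of-square identity
  have key : (1/2) * trace (Zᵀ*Z) + (lam/2) * trace ((X - X*Z)ᵀ*(X - X*Z))
      - ((1/2) * trace (Zstarᵀ*Zstar) + (lam/2) * trace ((X - X*Zstar)ᵀ*(X - X*Zstar)))
      = (1/2) * trace ((Z - Zstar)ᵀ * ((lam • M + 1) * (Z - Zstar))) := by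
    have e1 : ∀ W : Matrix (Fin N) (Fin N) ℝ, Xᵀ * (X * W) = M * W := by
      intro W; rw [hM, Matrix.mul_assoc]
    have a1 : ∀ W : Matrix (Fin N) (Fin N) ℝ, trace (M * W) = trace (Wᵀ * M) := by
      intro W
      conv_lhs => rw [← hMsymm]
      exact trT M W
    have b1 : trace (Zstarᵀ * Z) = trace (Zᵀ * Zstar) := trT Zstar Z
    have b2 : trace (Zstarᵀ * (M * Z)) = trace (Zᵀ * (M * Zstar)) := by
      rw [trT Zstar (M*Z), transpose_mul, hMsymm, Matrix.mul_assoc]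
    have c1 : trace (Zᵀ * Zstar) + lam * trace (Zᵀ * (M * Zstar)) = lam * trace (Zᵀ * M) := by
      have := congrArg (fun W => trace (Zᵀ * W)) hAZ
      simpa [Matrix.mul_add, Matrix.mul_smul, trace_add, trace_smul] using this
    have c2 : trace (Zstarᵀ * Zstar) + lam * trace (Zstarᵀ * (M * Zstar))
        = lam * trace (Zstarᵀ * M) := by
      have := congrArg (fun W => trace (Zstarᵀ * W)) hAZ
      simpa [Matrix.mul_add, Matrix.mul_smul, trace_add, trace_smul] using this
    simp only [Matrix.transpose_sub, Matrix.sub_mul, Matrix.mul_sub, Matrix.add_mul,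
      Matrix.mul_add, Matrix.one_mul, smul_mul_assoc, Matrix.mul_smul, trace_sub, trace_add,
      trace_smul, transpose_mul, Matrix.mul_assoc, smul_eq_mul, ← hM, e1, a1, b1, b2]
    linarith [c1, c2]
  -- nonnegativity of the quadratic remainder
  have hnn : 0 ≤ trace ((Z - Zstar)ᵀ * ((lam • M + 1) * (Z - Zstar))) := by
    have hps : ((Z - Zstar)ᴴ * (lam • M + 1) * (Z - Zstar)).PosSemidef :=
      hA.posSemidef.conjTranspose_mul_mul_same (Z - Zstar)
    have heq : (Z - Zstar)ᵀ * ((lam • M + 1) * (Z - Zstar))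
        = (Z - Zstar)ᴴ * (lam • M + 1) * (Z - Zstar) := by
      rw [Matrix.mul_assoc]; rfl
    rw [heq, trace]
    apply Finset.sum_nonneg
    intro i _
    have h := hps.dotProduct_mulVec_nonneg (Pi.single i 1)
    simpa [dotProduct, mulVec, Pi.single_apply, Finset.sum_ite_eq'] using h
  linarith [key, hnn]
end

section
/- With the setting of the previous identity, assume additionally: (i) ||(V_r^T R)^+ - (V_r^T R)^T||_2 <= eps/sqrt(1-eps), (ii) ||Xbar_r R||_F <= sqrt(1+eps) ||Xbar_r||_F, and (iii) ||(V_r^T R)^T||_2 <= sqrt(1+eps), for some 0 < eps < 1. Then ||B (V_r^T R)^+ - U_r Sigma_r||_F <= (eps * sqrt(1+eps)/sqrt(1-eps) + 1 + eps) ||Xbar_r||_F. -/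
open Matrix

lemma frobNorm_nonneg {m n : ℕ} (M : Matrix (Fin m) (Fin n) ℝ) : 0 ≤ frobNorm M :=
  Real.sqrt_nonneg _

lemma specNorm_nonneg {m n : ℕ} (M : Matrix (Fin m) (Fin n) ℝ) : 0 ≤ specNorm M :=
  norm_nonneg _

lemma frobNorm_transpose {m n : ℕ} (M : Matrix (Fin m) (Fin n) ℝ) :
    frobNorm Mᵀ = frobNorm M := by
  simp only [frobNorm, Matrix.transpose_apply]
  rw [Finset.sum_comm]

section Frob

attribute [local instance] Matrix.frobeniusNormedAddCommGroup

lemma frobNorm_eq_norm {m n : ℕ} (M : Matrix (Fin m) (Fin n) ℝ) : frobNorm M = ‖M‖ := by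
  rw [Matrix.frobenius_norm_def, frobNorm]
  simp only [Real.norm_eq_abs, sq_abs]
  rw [Real.sqrt_eq_rpow]
  norm_num

lemma frobNorm_add_le {m n : ℕ} (A B : Matrix (Fin m) (Fin n) ℝ) :
    frobNorm (A + B) ≤ frobNorm A + frobNorm B := by
  simp only [frobNorm_eq_norm]
  exact norm_add_le A B

end Frob

section Spec

open scoped Matrix.Norms.L2Operator

lemma specNorm_eq_norm {m n : ℕ} (M : Matrix (Fin m) (Fin n) ℝ) : specNorm M = ‖M‖ := rfl

lemma specNorm_transpose {m n : ℕ} (M : Matrix (Fin m) (Fin n) ℝ) :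
    specNorm Mᵀ = specNorm M := by
  have h : Mᵀ = Mᴴ := by
    ext i j
    simp [Matrix.conjTranspose_apply]
  rw [specNorm_eq_norm, specNorm_eq_norm, h, Matrix.l2_opNorm_conjTranspose]

end Spec

lemma frobNorm_mul_le_spec_left {a b c : ℕ} (A : Matrix (Fin a) (Fin b) ℝ)
    (B : Matrix (Fin b) (Fin c) ℝ) :
    frobNorm (A * B) ≤ specNorm A * frobNorm B := by
  set T := LinearMap.toContinuousLinearMap (Matrix.toEuclideanLin A) with hT
  have key : ∀ j : Fin c, ∑ i, ((A * B) i j)^2 ≤ (specNorm A)^2 * ∑ i, (B i j)^2 := by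
    intro j
    set v : EuclideanSpace ℝ (Fin b) := (WithLp.equiv 2 _).symm (fun i => B i j) with hv
    have hvn : ‖v‖^2 = ∑ i, (B i j)^2 := by
      rw [EuclideanSpace.norm_eq, Real.sq_sqrt (by positivity)]
      simp [hv, Real.norm_eq_abs, sq_abs]
    have hTv : ∀ i, (T v) i = (A * B) i j := by
      intro i
      show (Matrix.toEuclideanLin A v) i = _
      rw [Matrix.toEuclideanLin_apply]
      simp [Matrix.mulVec, Matrix.mul_apply, dotProduct, hv]
    have h1 : ‖T v‖^2 = ∑ i, ((A * B) i j)^2 := by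
      rw [EuclideanSpace.norm_eq, Real.sq_sqrt (by positivity)]
      refine Finset.sum_congr rfl fun i _ => ?_
      rw [hTv i, Real.norm_eq_abs, sq_abs]
    have h2 : ‖T v‖ ≤ specNorm A * ‖v‖ := T.le_opNorm v
    have h3 : ‖T v‖^2 ≤ (specNorm A * ‖v‖)^2 := by
      exact pow_le_pow_left₀ (norm_nonneg _) h2 2
    rw [h1, mul_pow, hvn] at h3
    exact h3
  have hsum : ∑ i, ∑ j, ((A * B) i j)^2 ≤ (specNorm A)^2 * ∑ i, ∑ j, (B i j)^2 := by
    rw [Finset.sum_comm, Finset.sum_comm (s := Finset.univ) (t := Finset.univ)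
      (f := fun i j => (B i j)^2), Finset.mul_sum]
    exact Finset.sum_le_sum fun j _ => key j
  calc frobNorm (A * B) = Real.sqrt (∑ i, ∑ j, ((A * B) i j)^2) := rfl
    _ ≤ Real.sqrt ((specNorm A)^2 * ∑ i, ∑ j, (B i j)^2) := Real.sqrt_le_sqrt hsum
    _ = specNorm A * frobNorm B := by
        rw [Real.sqrt_mul (sq_nonneg _), Real.sqrt_sq (specNorm_nonneg A)]
        rfl

lemma frobNorm_mul_le_spec_right {a b c : ℕ} (A : Matrix (Fin a) (Fin b) ℝ)
    (B : Matrix (Fin b) (Fin c) ℝ) :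
    frobNorm (A * B) ≤ frobNorm A * specNorm B := by
  calc frobNorm (A * B) = frobNorm (Bᵀ * Aᵀ) := by
        rw [← Matrix.transpose_mul, frobNorm_transpose]
    _ ≤ specNorm Bᵀ * frobNorm Aᵀ := frobNorm_mul_le_spec_left _ _
    _ = frobNorm A * specNorm B := by
        rw [specNorm_transpose, frobNorm_transpose]; ring

lemma isUnit_det_of_rank_eq {r : ℕ} (S : Matrix (Fin r) (Fin r) ℝ) (h : S.rank = r) :
    IsUnit S.det := by
  rw [isUnit_iff_ne_zero]
  intro hdet
  obtain ⟨v, hv, hSv⟩ := (Matrix.exists_mulVec_eq_zero_iff).mpr hdet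
  -- rank = r means mulVecLin has range of full dimension, hence injective
  have hrange : LinearMap.range S.mulVecLin = ⊤ := by
    apply Submodule.eq_top_of_finrank_eq
    rw [← Matrix.rank, h]
    simp [Module.finrank_fintype_fun_eq_card]
  have hsurj : Function.Surjective S.mulVecLin := LinearMap.range_eq_top.mp hrange
  have hinj : Function.Injective S.mulVecLin :=
    (LinearMap.injective_iff_surjective).mpr hsurj
  apply hv
  have : S.mulVecLin v = S.mulVecLin 0 := by
    simp [Matrix.mulVecLin_apply, hSv]
  exact hinj this

/-- with `X = X_r + Xbar_r`, `X_r = U_r Σ_r V_rᵀ`, `V_rᵀ R` of full row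
rank `r`, and the bounds (i) `‖(V_rᵀR)⁺ - (V_rᵀR)ᵀ‖₂ ≤ ε/√(1-ε)`,
(ii) `‖Xbar_r R‖_F ≤ √(1+ε) ‖Xbar_r‖_F`, (iii) `‖(V_rᵀR)ᵀ‖₂ ≤ √(1+ε)`, for `0 < ε < 1`:
`‖B (V_rᵀR)⁺ - U_r Σ_r‖_F ≤ (ε √(1+ε)/√(1-ε) + 1 + ε) ‖Xbar_r‖_F` with `B = X R`. -/
theorem sketch_pinv_frob_bound (D N r n : ℕ) (ε : ℝ) (hε : 0 < ε) (hε1 : ε < 1)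
    (X Xr Xbar : Matrix (Fin D) (Fin N) ℝ)
    (Ur : Matrix (Fin D) (Fin r) ℝ) (dr : Fin r → ℝ) (Vr : Matrix (Fin N) (Fin r) ℝ)
    (R : Matrix (Fin N) (Fin n) ℝ)
    (hUr : Urᵀ * Ur = 1) (hVr : Vrᵀ * Vr = 1)
    (hXr : Xr = Ur * Matrix.diagonal dr * Vrᵀ)
    (hX : X = Xr + Xbar)
    (hfr : (Vrᵀ * R).rank = r)
    (hi : specNorm (pinvFR (Vrᵀ * R) - (Vrᵀ * R)ᵀ) ≤ ε / Real.sqrt (1 - ε))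
    (hii : frobNorm (Xbar * R) ≤ Real.sqrt (1 + ε) * frobNorm Xbar)
    (hiii : specNorm ((Vrᵀ * R)ᵀ) ≤ Real.sqrt (1 + ε)) :
    frobNorm ((X * R) * pinvFR (Vrᵀ * R) - Ur * Matrix.diagonal dr) ≤
      (ε * Real.sqrt (1 + ε) / Real.sqrt (1 - ε) + 1 + ε) * frobNorm Xbar := by
  set M : Matrix (Fin r) (Fin n) ℝ := Vrᵀ * R with hM
  set P : Matrix (Fin n) (Fin r) ℝ := pinvFR M with hP
  -- M * P = 1
  have hdet : IsUnit (M * Mᵀ).det := by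
    apply isUnit_det_of_rank_eq
    rw [Matrix.rank_self_mul_transpose, hfr]
  have hMP : M * P = 1 := by
    rw [hP, pinvFR, ← Matrix.mul_assoc]
    exact Matrix.mul_nonsing_inv _ hdet
  -- the identity
  have hXrRP : Xr * R * P = Ur * Matrix.diagonal dr := by
    rw [hXr]
    calc Ur * Matrix.diagonal dr * Vrᵀ * R * P
        = Ur * Matrix.diagonal dr * (Vrᵀ * R * P) := by
          simp only [Matrix.mul_assoc]
      _ = Ur * Matrix.diagonal dr := by rw [← hM, hMP, Matrix.mul_one]
  have hident : (X * R) * P - Ur * Matrix.diagonal dr =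
      Xbar * R * (P - Mᵀ) + Xbar * R * Mᵀ := by
    rw [hX, Matrix.add_mul, Matrix.add_mul, hXrRP, add_sub_cancel_left,
      Matrix.mul_sub, sub_add_cancel]
  rw [hident]
  have hFnn : (0:ℝ) ≤ frobNorm (Xbar * R) := frobNorm_nonneg _
  have hεs : (0:ℝ) ≤ ε / Real.sqrt (1 - ε) := by positivity
  have h1e : (0:ℝ) ≤ Real.sqrt (1 + ε) := Real.sqrt_nonneg _
  have hb1 : frobNorm (Xbar * R * (P - Mᵀ)) ≤
      (Real.sqrt (1 + ε) * frobNorm Xbar) * (ε / Real.sqrt (1 - ε)) := by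
    calc frobNorm (Xbar * R * (P - Mᵀ))
        ≤ frobNorm (Xbar * R) * specNorm (P - Mᵀ) := frobNorm_mul_le_spec_right _ _
      _ ≤ (Real.sqrt (1 + ε) * frobNorm Xbar) * (ε / Real.sqrt (1 - ε)) :=
          mul_le_mul hii hi (specNorm_nonneg _) (mul_nonneg h1e (frobNorm_nonneg _))
  have hb2 : frobNorm (Xbar * R * Mᵀ) ≤
      (Real.sqrt (1 + ε) * frobNorm Xbar) * Real.sqrt (1 + ε) := by
    calc frobNorm (Xbar * R * Mᵀ)
        ≤ frobNorm (Xbar * R) * specNorm Mᵀ := frobNorm_mul_le_spec_right _ _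
      _ ≤ (Real.sqrt (1 + ε) * frobNorm Xbar) * Real.sqrt (1 + ε) :=
          mul_le_mul hii hiii (specNorm_nonneg _) (mul_nonneg h1e (frobNorm_nonneg _))
  have hs : Real.sqrt (1 + ε) * Real.sqrt (1 + ε) = 1 + ε :=
    Real.mul_self_sqrt (by linarith)
  have hfinal : (Real.sqrt (1 + ε) * frobNorm Xbar) * (ε / Real.sqrt (1 - ε)) +
      (Real.sqrt (1 + ε) * frobNorm Xbar) * Real.sqrt (1 + ε) =
      (ε * Real.sqrt (1 + ε) / Real.sqrt (1 - ε) + 1 + ε) * frobNorm Xbar := by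
    linear_combination frobNorm Xbar * hs
  calc frobNorm (Xbar * R * (P - Mᵀ) + Xbar * R * Mᵀ)
      ≤ frobNorm (Xbar * R * (P - Mᵀ)) + frobNorm (Xbar * R * Mᵀ) := frobNorm_add_le _ _
    _ ≤ (Real.sqrt (1 + ε) * frobNorm Xbar) * (ε / Real.sqrt (1 - ε)) +
        (Real.sqrt (1 + ε) * frobNorm Xbar) * Real.sqrt (1 + ε) := add_le_add hb1 hb2
    _ = (ε * Real.sqrt (1 + ε) / Real.sqrt (1 - ε) + 1 + ε) * frobNorm Xbar := hfinal
end

section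
/- Consider the Sketch-LSR objective f(a) = (lambda/2)||x - B a||_2^2 + ||a||_2^2 for a unit vector x in R^D, B = X R, with X = X_r + Xbar_r a rank-rho matrix with unit-norm columns and R an N-by-n matrix. Suppose: (i) V_r^T R has full row rank with ||(V_r^T R)^+||_2 <= 1/sqrt(1-eps); (ii) ||Xbar_r R||_F <= sqrt(1+eps)||Xbar_r||_F. Let ahat = (V_r^T R)^+ Sigma_r^{-1} U_r^T x. Then ||x - B ahat||_2 <= 1 + sqrt((1+eps)/(1-eps)) * ||Xbar_r||_F and ||ahat||_2 <= 1/sqrt(1-eps), hence f(ahat) <= (lambda/2)(1 + sqrt((1+eps)/(1-eps)) ||Xbar_r||_F)^2 + 1/(1-eps). -/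
open Matrix

/-- Euclidean norm of a real vector. -/
noncomputable def eunorm {n : ℕ} (v : Fin n → ℝ) : ℝ :=
  Real.sqrt (∑ i, (v i)^2)

lemma eunorm_nonneg {n : ℕ} (v : Fin n → ℝ) : 0 ≤ eunorm v := Real.sqrt_nonneg _
lemma eunorm_eq_norm {n : ℕ} (v : Fin n → ℝ) :
    eunorm v = ‖(WithLp.equiv 2 (Fin n → ℝ)).symm v‖ := by
  rw [EuclideanSpace.norm_eq]
  simp [eunorm, Real.norm_eq_abs, sq_abs]

lemma eunorm_sub_le {n : ℕ} (a b : Fin n → ℝ) : eunorm (a - b) ≤ eunorm a + eunorm b := by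
  rw [eunorm_eq_norm, eunorm_eq_norm, eunorm_eq_norm]
  exact norm_sub_le ((WithLp.equiv 2 (Fin n → ℝ)).symm a) ((WithLp.equiv 2 (Fin n → ℝ)).symm b)

lemma eunorm_mulVec_le_spec {m n : ℕ} (M : Matrix (Fin m) (Fin n) ℝ) (v : Fin n → ℝ) :
    eunorm (M.mulVec v) ≤ specNorm M * eunorm v := by
  rw [eunorm_eq_norm, eunorm_eq_norm]
  have := (LinearMap.toContinuousLinearMap (Matrix.toEuclideanLin M)).le_opNorm
    ((WithLp.equiv 2 (Fin n → ℝ)).symm v)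
  simpa [specNorm, Matrix.toEuclideanLin_apply_piLp_toLp] using this

lemma eunorm_mulVec_le_frob {m n : ℕ} (M : Matrix (Fin m) (Fin n) ℝ) (v : Fin n → ℝ) :
    eunorm (M.mulVec v) ≤ frobNorm M * eunorm v := by
  rw [eunorm, eunorm, frobNorm, ← Real.sqrt_mul (by positivity)]
  apply Real.sqrt_le_sqrt
  rw [Finset.sum_mul]
  apply Finset.sum_le_sum
  intro i _
  calc (M.mulVec v i)^2 = (∑ j, M i j * v j)^2 := rfl
  _ ≤ (∑ j, (M i j)^2) * ∑ j, (v j)^2 := Finset.sum_mul_sq_le_sq_mul_sq _ _ _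

lemma mul_pinvFR {k r : ℕ} (M : Matrix (Fin k) (Fin r) ℝ) (h : M.rank = k) :
    M * pinvFR M = 1 := by
  have hrank : (M * Mᵀ).rank = k := by rw [Matrix.rank_self_mul_transpose, h]
  have hsurj : Function.Surjective (M * Mᵀ).mulVec := by
    have : LinearMap.range (M * Mᵀ).mulVecLin = ⊤ := by
      apply Submodule.eq_top_of_finrank_eq
      rw [← Matrix.rank, hrank, Module.finrank_fintype_fun_eq_card, Fintype.card_fin]
    intro v
    obtain ⟨w, hw⟩ := (LinearMap.range_eq_top.mp this) v
    exact ⟨w, hw⟩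
  have hunit : IsUnit (M * Mᵀ) := Matrix.mulVec_surjective_iff_isUnit.mp hsurj
  rw [pinvFR, ← Matrix.mul_assoc]
  exact Matrix.mul_nonsing_inv _ ((Matrix.isUnit_iff_isUnit_det _).mp hunit)

lemma diag_mul_inv {r : ℕ} (d : Fin r → ℝ) (hd : ∀ i, 1 ≤ d i) :
    Matrix.diagonal d * (Matrix.diagonal d)⁻¹ = 1 := by
  apply Matrix.mul_nonsing_inv
  rw [Matrix.det_diagonal]
  exact isUnit_iff_ne_zero.mpr (Finset.prod_pos fun i _ => lt_of_lt_of_le one_pos (hd i)).ne'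

lemma diag_inv_eq {r : ℕ} (d : Fin r → ℝ) (hd : ∀ i, 1 ≤ d i) :
    (Matrix.diagonal d)⁻¹ = Matrix.diagonal (fun i => (d i)⁻¹) := by
  apply Matrix.inv_eq_right_inv
  rw [Matrix.diagonal_mul_diagonal]
  convert Matrix.diagonal_one with i
  exact mul_inv_cancel₀ (lt_of_lt_of_le one_pos (hd i)).ne'

lemma dot_mulVec_left {m k : ℕ} (A : Matrix (Fin m) (Fin k) ℝ) (v : Fin k → ℝ) (b : Fin m → ℝ) :
    (A.mulVec v) ⬝ᵥ b = v ⬝ᵥ (Aᵀ.mulVec b) := by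
  rw [dotProduct_comm, Matrix.dotProduct_mulVec, ← Matrix.mulVec_transpose, dotProduct_comm]

lemma dot_self_nonneg' {n : ℕ} (v : Fin n → ℝ) : 0 ≤ v ⬝ᵥ v :=
  Finset.sum_nonneg fun _ _ => mul_self_nonneg _

lemma eunorm_sqrt_dot {n : ℕ} (v : Fin n → ℝ) : eunorm v = Real.sqrt (v ⬝ᵥ v) := by
  simp [eunorm, dotProduct, pow_two]

/-- bounds on the Sketch-LSR objective
`f(a) = (lam/2)‖x - B a‖₂² + ‖a‖₂²` at `ahat = (V_rᵀR)⁺ Σ_r⁻¹ U_rᵀ x`, for a unit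
vector `x`, `B = X R`, `X = X_r + Xbar_r` with unit-norm columns, `X_r = U_r Σ_r V_rᵀ`,
all top-`r` singular values at least `1`, `V_rᵀ R` of full row rank with
`‖(V_rᵀR)⁺‖₂ ≤ 1/√(1-ε)`, and `‖Xbar_r R‖_F ≤ √(1+ε) ‖Xbar_r‖_F`. -/
theorem sketchLSR_objective_bound (D N r n : ℕ) (lam ε : ℝ)
    (hlam : 0 < lam) (hε : 0 < ε) (hε1 : ε < 1)
    (x : Fin D → ℝ) (hx : eunorm x = 1)
    (X Xr Xbar : Matrix (Fin D) (Fin N) ℝ)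
    (Ur : Matrix (Fin D) (Fin r) ℝ) (d : Fin r → ℝ) (Vr : Matrix (Fin N) (Fin r) ℝ)
    (R : Matrix (Fin N) (Fin n) ℝ)
    (hcols : ∀ j, eunorm (fun i => X i j) = 1)
    (hUr : Urᵀ * Ur = 1) (hVr : Vrᵀ * Vr = 1) (hd : ∀ i, 1 ≤ d i)
    (hXr : Xr = Ur * Matrix.diagonal d * Vrᵀ) (hX : X = Xr + Xbar)
    (hfr : (Vrᵀ * R).rank = r)
    (hpinv : specNorm (pinvFR (Vrᵀ * R)) ≤ 1 / Real.sqrt (1 - ε))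
    (hXbarR : frobNorm (Xbar * R) ≤ Real.sqrt (1 + ε) * frobNorm Xbar) :
    let B := X * R
    let ahat : Fin n → ℝ :=
      (pinvFR (Vrᵀ * R)).mulVec (((Matrix.diagonal d)⁻¹).mulVec (Urᵀ.mulVec x))
    eunorm (x - B.mulVec ahat) ≤
        1 + Real.sqrt ((1 + ε)/(1 - ε)) * frobNorm Xbar ∧
      eunorm ahat ≤ 1 / Real.sqrt (1 - ε) ∧
      (lam/2) * eunorm (x - B.mulVec ahat) ^ 2 + eunorm ahat ^ 2 ≤
        (lam/2) * (1 + Real.sqrt ((1 + ε)/(1 - ε)) * frobNorm Xbar) ^ 2 +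
          1/(1 - ε) := by
  intro B ahat
  have hB : B = X * R := rfl
  have hah : ahat = (pinvFR (Vrᵀ * R)).mulVec
      (((Matrix.diagonal d)⁻¹).mulVec (Urᵀ.mulVec x)) := rfl
  set u := Urᵀ.mulVec x with hu
  have h1ε : (0:ℝ) < 1 - ε := by linarith
  have hsqε : 0 < Real.sqrt (1 - ε) := Real.sqrt_pos.mpr h1ε
  -- x ⬝ᵥ x = 1
  have hxx : x ⬝ᵥ x = 1 := by
    have h1 : Real.sqrt (x ⬝ᵥ x) = 1 := by rw [← eunorm_sqrt_dot, hx]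
    have h2 := congrArg (·^2) h1
    simpa [Real.sq_sqrt (dot_self_nonneg' x)] using h2
  -- projection dot products
  have hup : (Ur.mulVec u) ⬝ᵥ (Ur.mulVec u) = u ⬝ᵥ u := by
    rw [dot_mulVec_left, Matrix.mulVec_mulVec, hUr, Matrix.one_mulVec]
  have hxp : x ⬝ᵥ (Ur.mulVec u) = u ⬝ᵥ u := by
    rw [dotProduct_comm, dot_mulVec_left]
  have hresid : (x - Ur.mulVec u) ⬝ᵥ (x - Ur.mulVec u) = 1 - u ⬝ᵥ u := by
    have e : (x - Ur.mulVec u) ⬝ᵥ (x - Ur.mulVec u) =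
        x ⬝ᵥ x - x ⬝ᵥ (Ur.mulVec u) - ((Ur.mulVec u) ⬝ᵥ x -
          (Ur.mulVec u) ⬝ᵥ (Ur.mulVec u)) := by
      simp only [sub_dotProduct, dotProduct_sub]
      ring
    rw [e, hxx, hxp, hup, dotProduct_comm (Ur.mulVec u) x, hxp]
    ring
  have huu_le : u ⬝ᵥ u ≤ 1 := by
    have := dot_self_nonneg' (x - Ur.mulVec u)
    rw [hresid] at this; linarith
  have hu_norm : eunorm u ≤ 1 := by
    rw [eunorm_sqrt_dot]
    calc Real.sqrt (u ⬝ᵥ u) ≤ Real.sqrt 1 := Real.sqrt_le_sqrt huu_le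
    _ = 1 := Real.sqrt_one
  have hxp_norm : eunorm (x - Ur.mulVec u) ≤ 1 := by
    rw [eunorm_sqrt_dot, hresid]
    calc Real.sqrt (1 - u ⬝ᵥ u) ≤ Real.sqrt 1 := Real.sqrt_le_sqrt (by linarith [dot_self_nonneg' u])
    _ = 1 := Real.sqrt_one
  -- contraction by the inverse diagonal
  have hwnorm : eunorm (((Matrix.diagonal d)⁻¹).mulVec u) ≤ eunorm u := by
    have hw : ((Matrix.diagonal d)⁻¹).mulVec u = fun i => (d i)⁻¹ * u i := by
      rw [diag_inv_eq d hd]; funext i; rw [Matrix.mulVec_diagonal]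
    rw [hw, eunorm, eunorm]
    apply Real.sqrt_le_sqrt
    apply Finset.sum_le_sum
    intro i _
    have hdi : (0:ℝ) < d i := lt_of_lt_of_le one_pos (hd i)
    have ha : 0 < (d i)⁻¹ := inv_pos.mpr hdi
    have ha1 : (d i)⁻¹ ≤ 1 := by
      rw [inv_le_one_iff₀]; right; exact hd i
    have hsq : ((d i)⁻¹)^2 ≤ 1 := by nlinarith
    calc ((d i)⁻¹ * u i)^2 = ((d i)⁻¹)^2 * (u i)^2 := by ring
    _ ≤ 1 * (u i)^2 := mul_le_mul_of_nonneg_right hsq (sq_nonneg _)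
    _ = (u i)^2 := one_mul _
  -- bound on ahat
  have hahat : eunorm ahat ≤ 1 / Real.sqrt (1 - ε) := by
    rw [hah]
    calc eunorm ((pinvFR (Vrᵀ * R)).mulVec (((Matrix.diagonal d)⁻¹).mulVec u))
        ≤ specNorm (pinvFR (Vrᵀ * R)) * eunorm (((Matrix.diagonal d)⁻¹).mulVec u) :=
          eunorm_mulVec_le_spec _ _
    _ ≤ (1 / Real.sqrt (1 - ε)) * 1 :=
          mul_le_mul hpinv (le_trans hwnorm hu_norm)
            (eunorm_nonneg _) (by positivity)
    _ = 1 / Real.sqrt (1 - ε) := mul_one _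
  -- the key matrix identity
  have hMp : (Vrᵀ * R) * pinvFR (Vrᵀ * R) = 1 := mul_pinvFR _ hfr
  have e1 : Xr * R = Ur * Matrix.diagonal d * (Vrᵀ * R) := by
    rw [hXr, Matrix.mul_assoc]
  have e2 : Xr * R * pinvFR (Vrᵀ * R) = Ur * Matrix.diagonal d := by
    rw [e1, Matrix.mul_assoc, hMp, Matrix.mul_one]
  have e3 : Xr * R * pinvFR (Vrᵀ * R) * (Matrix.diagonal d)⁻¹ = Ur := by
    rw [e2, Matrix.mul_assoc, diag_mul_inv d hd, Matrix.mul_one]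
  have hXrR : (Xr * R).mulVec ahat = Ur.mulVec u := by
    rw [hah, Matrix.mulVec_mulVec, Matrix.mulVec_mulVec, e3]
  have hBa : B.mulVec ahat = Ur.mulVec u + (Xbar * R).mulVec ahat := by
    rw [hB, hX, Matrix.add_mul, Matrix.add_mulVec, hXrR]
  have hdiff : x - B.mulVec ahat = (x - Ur.mulVec u) - (Xbar * R).mulVec ahat := by
    rw [hBa]; abel
  -- bound on the Xbar part
  have hXbar_a : eunorm ((Xbar * R).mulVec ahat) ≤
      Real.sqrt ((1 + ε)/(1 - ε)) * frobNorm Xbar := by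
    calc eunorm ((Xbar * R).mulVec ahat)
        ≤ frobNorm (Xbar * R) * eunorm ahat := eunorm_mulVec_le_frob _ _
    _ ≤ (Real.sqrt (1 + ε) * frobNorm Xbar) * (1 / Real.sqrt (1 - ε)) :=
          mul_le_mul hXbarR hahat (eunorm_nonneg _)
            (mul_nonneg (Real.sqrt_nonneg _) (frobNorm_nonneg _))
    _ = Real.sqrt ((1 + ε)/(1 - ε)) * frobNorm Xbar := by
          rw [Real.sqrt_div (by linarith : (0:ℝ) ≤ 1 + ε)]
          ring
  have hfirst : eunorm (x - B.mulVec ahat) ≤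
      1 + Real.sqrt ((1 + ε)/(1 - ε)) * frobNorm Xbar := by
    rw [hdiff]
    exact le_trans (eunorm_sub_le _ _) (add_le_add hxp_norm hXbar_a)
  refine ⟨hfirst, hahat, ?_⟩
  have hsq2 : eunorm ahat ^ 2 ≤ 1/(1 - ε) := by
    calc eunorm ahat ^ 2 ≤ (1 / Real.sqrt (1 - ε)) ^ 2 :=
          pow_le_pow_left₀ (eunorm_nonneg _) hahat 2
    _ = 1/(1 - ε) := by rw [div_pow, one_pow, Real.sq_sqrt h1ε.le]
  have hsq1 : eunorm (x - B.mulVec ahat) ^ 2 ≤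
      (1 + Real.sqrt ((1 + ε)/(1 - ε)) * frobNorm Xbar) ^ 2 :=
    pow_le_pow_left₀ (eunorm_nonneg _) hfirst 2
  have := mul_le_mul_of_nonneg_left hsq1 (by positivity : (0:ℝ) ≤ lam/2)
  linarith
end

section
/- Let A be an n-by-N real matrix of rank rho. Then the nuclear norm of A satisfies ||A||_* = min over all factorizations A = P Q^T (P of size n-by-rho, Q of size N-by-rho) of (1/2)(||P||_F^2 + ||Q||_F^2). -/
open Matrix

/-- Nuclear norm: sum of the singular values of `M`, i.e. of the square roots of the
eigenvalues of `Mᴴ M`. -/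
noncomputable def nuclearNorm {m n : ℕ} (M : Matrix (Fin m) (Fin n) ℝ) : ℝ :=
  ∑ i, Real.sqrt ((Matrix.isHermitian_conjTranspose_mul_self M).eigenvalues i)

/-- Orthonormal rows: transform preserves sum of squares. -/
lemma orth_sum_sq {N : ℕ} (U : Matrix (Fin N) (Fin N) ℝ)
    (hU : ∀ j j', ∑ k, U j k * U j' k = (if j = j' then (1:ℝ) else 0))
    (q : Fin N → ℝ) :
    ∑ k, (∑ j, U j k * q j)^2 = ∑ j, (q j)^2 := by
  calc ∑ k, (∑ j, U j k * q j)^2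
      = ∑ j, ∑ j', (q j * q j') * ∑ k, U j k * U j' k := by
        simp_rw [Finset.mul_sum, sq, Finset.sum_mul_sum]
        rw [Finset.sum_comm]
        refine Finset.sum_congr rfl fun j _ => ?_
        rw [Finset.sum_comm]
        exact Finset.sum_congr rfl fun j' _ => Finset.sum_congr rfl fun k _ => by ring
    _ = ∑ j, (q j)^2 := by
        simp_rw [hU, mul_ite, mul_zero, Finset.sum_ite_eq, Finset.mem_univ, if_true, sq, mul_one]

/-- Bessel-type inequality for a family with `∑ᵢ wᵢₖ wᵢₗ = δₖₗ εₖ`, `εₖ ≤ 1`. -/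
lemma bessel_aux {n N : ℕ} (w : Fin n → Fin N → ℝ) (ε : Fin N → ℝ)
    (hw : ∀ k l, ∑ i, w i k * w i l = (if k = l then ε k else 0))
    (hε1 : ∀ k, ε k ≤ 1)
    (p : Fin n → ℝ) :
    ∑ k, (∑ i, w i k * p i)^2 ≤ ∑ i, (p i)^2 := by
  set t : Fin N → ℝ := fun k => ∑ i, w i k * p i with ht
  have h1 : ∑ i, p i * (∑ k, w i k * t k) = ∑ k, (t k)^2 := by
    simp_rw [Finset.mul_sum]
    rw [Finset.sum_comm]
    refine Finset.sum_congr rfl fun k _ => ?_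
    calc ∑ i, p i * (w i k * t k) = (∑ i, w i k * p i) * t k := by
          rw [Finset.sum_mul]; exact Finset.sum_congr rfl fun i _ => by ring
      _ = (t k)^2 := by rw [ht]; ring
  have h2 : ∑ i, (∑ k, w i k * t k)^2 = ∑ k, ε k * (t k)^2 := by
    calc ∑ i, (∑ k, w i k * t k)^2
        = ∑ k, ∑ l, (t k * t l) * ∑ i, w i k * w i l := by
          simp_rw [Finset.mul_sum, sq, Finset.sum_mul_sum]
          rw [Finset.sum_comm]
          refine Finset.sum_congr rfl fun k _ => ?_
          rw [Finset.sum_comm]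
          exact Finset.sum_congr rfl fun l _ => Finset.sum_congr rfl fun i _ => by ring
      _ = ∑ k, ε k * (t k)^2 := by
          simp_rw [hw, mul_ite, mul_zero, Finset.sum_ite_eq, Finset.mem_univ, if_true, sq]
          exact Finset.sum_congr rfl fun k _ => by ring
  have h3 : (0:ℝ) ≤ ∑ i, (p i - ∑ k, w i k * t k)^2 :=
    Finset.sum_nonneg fun i _ => sq_nonneg _
  have h4 : ∑ i, (p i - ∑ k, w i k * t k)^2
      = ∑ i, (p i)^2 - 2 * ∑ k, (t k)^2 + ∑ k, ε k * (t k)^2 := by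
    have he : ∀ i, (p i - ∑ k, w i k * t k)^2
        = (p i)^2 - 2*(p i * (∑ k, w i k * t k)) + (∑ k, w i k * t k)^2 := fun i => by ring
    simp_rw [he]
    rw [Finset.sum_add_distrib, Finset.sum_sub_distrib, h2, ← Finset.mul_sum, h1]
  have h5 : ∑ k, ε k * (t k)^2 ≤ ∑ k, (t k)^2 := by
    refine Finset.sum_le_sum fun k _ => ?_
    nlinarith [sq_nonneg (t k), hε1 k]
  linarith [h3, h4 ▸ h3]

lemma frobNorm_sq' {m n : ℕ} (M : Matrix (Fin m) (Fin n) ℝ) :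
    Real.sqrt (∑ i, ∑ j, (M i j)^2) ^ 2 = ∑ i, ∑ j, (M i j)^2 :=
  Real.sq_sqrt (by positivity)

/-- for an `n × N` real matrix `A` of rank `ρ`, the nuclear norm equals
the minimum of `(1/2)(‖P‖_F² + ‖Q‖_F²)` over all factorizations `A = P Qᵀ` with
`P` of size `n × ρ` and `Q` of size `N × ρ`. -/
theorem nuclearNorm_eq_min_factorization (n N ρ : ℕ)
    (A : Matrix (Fin n) (Fin N) ℝ) (hrank : A.rank = ρ) :
    IsLeast
      { c : ℝ | ∃ (P : Matrix (Fin n) (Fin ρ) ℝ) (Q : Matrix (Fin N) (Fin ρ) ℝ),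
          A = P * Qᵀ ∧ c = (1/2) * (frobNorm P ^ 2 + frobNorm Q ^ 2) }
      (nuclearNorm A) := by
  classical
  have hB : (Aᴴ * A).IsHermitian := Matrix.isHermitian_conjTranspose_mul_self A
  set μ : Fin N → ℝ := hB.eigenvalues with hμdef
  set U : Matrix (Fin N) (Fin N) ℝ := (hB.eigenvectorUnitary : Matrix (Fin N) (Fin N) ℝ) with hUdef
  have hUU : U * star U = 1 := (Matrix.mem_unitaryGroup_iff).mp hB.eigenvectorUnitary.2
  have hUU' : star U * U = 1 := (Matrix.mem_unitaryGroup_iff').mp hB.eigenvectorUnitary.2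
  -- entrywise orthogonality
  have hrow : ∀ j j', ∑ k, U j k * U j' k = (if j = j' then (1:ℝ) else 0) := by
    intro j j'
    have := congrFun (congrFun hUU j) j'
    simpa [Matrix.mul_apply, Matrix.one_apply, Matrix.star_apply] using this
  have hcol : ∀ k l, ∑ j, U j k * U j l = (if k = l then (1:ℝ) else 0) := by
    intro k l
    have := congrFun (congrFun hUU' k) l
    simpa [Matrix.mul_apply, Matrix.one_apply, Matrix.star_apply, mul_comm] using this
  set C : Matrix (Fin n) (Fin N) ℝ := A * U with hCdef
  have hCC : Cᴴ * C = Matrix.diagonal μ := by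
    have hd : star U * (Aᴴ * A) * U = Matrix.diagonal (RCLike.ofReal ∘ hB.eigenvalues) := by
      have h0 := hB.conjStarAlgAut_star_eigenvectorUnitary
      rw [Unitary.conjStarAlgAut_star_apply] at h0
      exact h0
    have : Cᴴ * C = star U * (Aᴴ * A) * U := by
      rw [hCdef, Matrix.conjTranspose_mul, Matrix.star_eq_conjTranspose]
      simp [Matrix.mul_assoc]
    rw [this, hd]
    simp [hμdef]
  have F1 : ∀ k l, ∑ i, C i k * C i l = (if k = l then μ k else 0) := by
    intro k l
    have := congrFun (congrFun hCC k) l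
    simpa [Matrix.mul_apply, Matrix.conjTranspose_apply, Matrix.diagonal_apply] using this
  have hμ0 : ∀ k, 0 ≤ μ k := fun k =>
    (Matrix.posSemidef_conjTranspose_mul_self A).eigenvalues_nonneg k
  set σ : Fin N → ℝ := fun k => Real.sqrt (μ k) with hσdef
  have hσ0 : ∀ k, 0 ≤ σ k := fun k => Real.sqrt_nonneg _
  have hσsq : ∀ k, σ k * σ k = μ k := fun k => Real.mul_self_sqrt (hμ0 k)
  have hσz : ∀ k, μ k = 0 → σ k = 0 := fun k h => by rw [hσdef]; simp [h]
  have hσne : ∀ k, μ k ≠ 0 → σ k ≠ 0 := by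
    intro k h hs
    exact h (by rw [← hσsq k, hs, mul_zero])
  have hC0 : ∀ k, μ k = 0 → ∀ i, C i k = 0 := by
    intro k hk i
    have h1 := F1 k k
    rw [if_pos rfl, hk] at h1
    have := (Finset.sum_eq_zero_iff_of_nonneg
      (fun i _ => mul_self_nonneg (C i k))).mp h1 i (Finset.mem_univ i)
    exact mul_self_eq_zero.mp this
  set w : Fin n → Fin N → ℝ := fun i k => C i k * (σ k)⁻¹ with hwdef
  have hCw : ∀ i k, C i k = σ k * w i k := by
    intro i k
    by_cases hk : μ k = 0
    · rw [hC0 k hk i, hσz k hk]; simp [hwdef, hC0 k hk i]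
    · rw [hwdef]; rw [mul_comm (σ k), mul_assoc, inv_mul_cancel₀ (hσne k hk), mul_one]
  have F4 : ∀ k l, ∑ i, w i k * w i l
      = (if k = l then (if μ k = 0 then (0:ℝ) else 1) else 0) := by
    intro k l
    have : ∑ i, w i k * w i l = ((σ k)⁻¹ * (σ l)⁻¹) * ∑ i, C i k * C i l := by
      rw [Finset.mul_sum]
      exact Finset.sum_congr rfl fun i _ => by rw [hwdef]; ring
    rw [this, F1]
    by_cases hkl : k = l
    · subst hkl
      by_cases hk : μ k = 0
      · simp [hk]
      · rw [if_pos rfl, if_pos rfl, if_neg hk, ← hσsq k]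
        field_simp [hσne k hk]
    · simp [hkl]
  have hA_eq : ∀ i j, A i j = ∑ k, σ k * w i k * U j k := by
    intro i j
    have hCU : C * star U = A := by
      rw [hCdef, Matrix.mul_assoc, hUU, Matrix.mul_one]
    have := congrFun (congrFun hCU i) j
    rw [← this, Matrix.mul_apply]
    exact Finset.sum_congr rfl fun k _ => by
      rw [Matrix.star_apply, star_trivial, hCw i k]
  have hnucl : nuclearNorm A = ∑ k, σ k := rfl
  -- enumeration of nonzero eigenvalues
  have hcard : Fintype.card {k // μ k ≠ 0} = ρ := by
    rw [hμdef]
    rw [← hB.rank_eq_card_non_zero_eigs, Matrix.rank_conjTranspose_mul_self, hrank]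
  set e : Fin ρ ≃ {k // μ k ≠ 0} := (Fintype.equivFinOfCardEq hcard).symm with hedef
  have hsubt : ∀ (f : Fin N → ℝ), (∀ l, μ l = 0 → f l = 0) →
      ∑ k : Fin ρ, f (e k) = ∑ l, f l := by
    intro f hf
    rw [Equiv.sum_comp e (fun x : {k // μ k ≠ 0} => f (x : Fin N))]
    rw [← Finset.sum_subtype (Finset.univ.filter (fun l => μ l ≠ 0))
      (fun x => by simp) f]
    refine Finset.sum_subset (Finset.filter_subset _ _) fun x _ hx => ?_
    refine hf x ?_
    by_contra hne
    exact hx (Finset.mem_filter.mpr ⟨Finset.mem_univ x, hne⟩)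
  constructor
  · -- membership
    set s : Fin ρ → ℝ := fun k => Real.sqrt (σ (e k)) with hsdef
    have hss : ∀ k, s k * s k = σ (e k) := fun k => Real.mul_self_sqrt (hσ0 _)
    refine ⟨Matrix.of (fun i k => s k * w i (e k)), Matrix.of (fun j k => s k * U j (e k)),
      ?_, ?_⟩
    · ext i j
      rw [Matrix.mul_apply]
      have : ∀ k : Fin ρ, (Matrix.of (fun i k => s k * w i (e k))) i k *
          (Matrix.of (fun j k => s k * U j (e k)))ᵀ k j
          = σ (e k) * w i (e k) * U j (e k) := by
        intro k
        simp only [Matrix.of_apply, Matrix.transpose_apply]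
        rw [← hss k]; ring
      rw [Finset.sum_congr rfl fun k _ => this k]
      rw [hsubt (fun l => σ l * w i l * U j l)
        (fun l hl => by show σ l * w i l * U j l = 0; rw [hσz l hl]; ring)]
      exact hA_eq i j
    · have hsum : ∀ (m : ℕ) (v : Fin m → Fin N → ℝ),
          (∀ l, μ l ≠ 0 → ∑ i, v i l * v i l = 1) →
          ∑ i, ∑ k : Fin ρ, (s k * v i (e k))^2 = ∑ l, σ l := by
        intro m v hv
        rw [Finset.sum_comm]
        have : ∀ k : Fin ρ, ∑ i, (s k * v i (e k))^2 = σ (e k) := by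
          intro k
          have : ∑ i, (s k * v i (e k))^2 = σ (e k) * ∑ i, v i (e k) * v i (e k) := by
            rw [Finset.mul_sum]
            exact Finset.sum_congr rfl fun i _ => by rw [sq, ← hss k]; ring
          rw [this, hv (e k) (e k).2, mul_one]
        rw [Finset.sum_congr rfl fun k _ => this k]
        exact hsubt σ hσz
      have hP : ∑ i, ∑ k : Fin ρ, ((Matrix.of (fun i k => s k * w i (e k))) i k)^2
          = ∑ l, σ l := by
        refine hsum n w fun l hl => ?_
        have := F4 l l
        rwa [if_pos rfl, if_neg hl] at this
      have hQ : ∑ j, ∑ k : Fin ρ, ((Matrix.of (fun j k => s k * U j (e k))) j k)^2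
          = ∑ l, σ l := by
        refine hsum N (fun j l => U j l) fun l _ => ?_
        have := hcol l l
        rwa [if_pos rfl] at this
      rw [hnucl]
      rw [frobNorm, frobNorm, Real.sq_sqrt (by positivity), Real.sq_sqrt (by positivity)]
      rw [hP, hQ]
      ring
  · -- lower bound
    rintro c ⟨P, Q, hfact, hc⟩
    have hApq : ∀ i j, A i j = ∑ m, P i m * Q j m := fun i j => by
      rw [hfact, Matrix.mul_apply]
      exact Finset.sum_congr rfl fun m _ => rfl
    have hCapp : ∀ i k, C i k = ∑ j, A i j * U j k := fun i k => by
      rw [hCdef, Matrix.mul_apply]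
    have step1 : ∀ k, σ k = ∑ m, (∑ i, w i k * P i m) * (∑ j, U j k * Q j m) := by
      intro k
      have hsw : ∑ i, w i k * C i k = σ k := by
        have h1 : ∑ i, w i k * C i k = σ k * ∑ i, w i k * w i k := by
          rw [Finset.mul_sum]
          exact Finset.sum_congr rfl fun i _ => by rw [hCw i k]; ring
        rw [h1, F4 k k, if_pos rfl]
        by_cases hk : μ k = 0
        · simp [hσz k hk, hk]
        · simp [hk]
      calc σ k = ∑ i, w i k * C i k := hsw.symm
        _ = ∑ i, ∑ j, ∑ m, (w i k * P i m) * (U j k * Q j m) := by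
            refine Finset.sum_congr rfl fun i _ => ?_
            rw [hCapp i k, Finset.mul_sum]
            refine Finset.sum_congr rfl fun j _ => ?_
            rw [hApq i j, Finset.sum_mul, Finset.mul_sum]
            exact Finset.sum_congr rfl fun m _ => by ring
        _ = ∑ i, ∑ m, ∑ j, (w i k * P i m) * (U j k * Q j m) :=
            Finset.sum_congr rfl fun i _ => Finset.sum_comm
        _ = ∑ m, ∑ i, ∑ j, (w i k * P i m) * (U j k * Q j m) := Finset.sum_comm
        _ = ∑ m, (∑ i, w i k * P i m) * (∑ j, U j k * Q j m) := by
            refine Finset.sum_congr rfl fun m _ => ?_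
            rw [Finset.sum_mul_sum]
    have hbound : ∀ k m, (∑ i, w i k * P i m) * (∑ j, U j k * Q j m)
        ≤ ((∑ i, w i k * P i m)^2 + (∑ j, U j k * Q j m)^2)/2 := fun k m => by
      nlinarith [sq_nonneg ((∑ i, w i k * P i m) - (∑ j, U j k * Q j m))]
    have hH : ∑ k, ∑ m, (∑ i, w i k * P i m)^2 ≤ ∑ i, ∑ m, (P i m)^2 := by
      calc ∑ k, ∑ m, (∑ i, w i k * P i m)^2
          = ∑ m, ∑ k, (∑ i, w i k * P i m)^2 := Finset.sum_comm
        _ ≤ ∑ m, ∑ i, (P i m)^2 := Finset.sum_le_sum fun m _ =>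
            bessel_aux w (fun k => if μ k = 0 then (0:ℝ) else 1) F4
              (fun k => by show (if μ k = 0 then (0:ℝ) else 1) ≤ 1; split <;> norm_num) (fun i => P i m)
        _ = ∑ i, ∑ m, (P i m)^2 := Finset.sum_comm
    have hG : ∑ k, ∑ m, (∑ j, U j k * Q j m)^2 = ∑ j, ∑ m, (Q j m)^2 := by
      calc ∑ k, ∑ m, (∑ j, U j k * Q j m)^2
          = ∑ m, ∑ k, (∑ j, U j k * Q j m)^2 := Finset.sum_comm
        _ = ∑ m, ∑ j, (Q j m)^2 :=
            Finset.sum_congr rfl fun m _ => orth_sum_sq U hrow (fun j => Q j m)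
        _ = ∑ j, ∑ m, (Q j m)^2 := Finset.sum_comm
    rw [hc, frobNorm, frobNorm, Real.sq_sqrt (by positivity), Real.sq_sqrt (by positivity),
      hnucl]
    calc ∑ k, σ k
        = ∑ k, ∑ m, (∑ i, w i k * P i m) * (∑ j, U j k * Q j m) :=
          Finset.sum_congr rfl fun k _ => step1 k
      _ ≤ ∑ k, ∑ m, ((∑ i, w i k * P i m)^2 + (∑ j, U j k * Q j m)^2)/2 :=
          Finset.sum_le_sum fun k _ => Finset.sum_le_sum fun m _ => hbound k m
      _ = (∑ k, ∑ m, (∑ i, w i k * P i m)^2 + ∑ k, ∑ m, (∑ j, U j k * Q j m)^2)/2 := by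
          simp only [add_div, Finset.sum_add_distrib, ← Finset.sum_div]
      _ ≤ (∑ i, ∑ m, (P i m)^2 + ∑ j, ∑ m, (Q j m)^2)/2 := by
          rw [hG]; linarith [hH]
      _ = 1/2 * (∑ i, ∑ m, (P i m)^2 + ∑ j, ∑ m, (Q j m)^2) := by ring
end
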